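/- Let B be a Boolean algebra, let □ : B → B satisfy the modal axioms (m.i) and (m.ii) together with the coherence condition □⊥ = ⊥, and let p be a finitely additive probability on B. Then the belief Bel(x) = p(□x) is sub-additive: for all x, y ∈ B with x ⊓ y = ⊥, p(□x) + p(□y) ≤ p(□(x ⊔ y)). -/
import Mathlib

/-- For a coherent modality satisfying (m.i) and (m.ii) and a finitely
additive probability `p`, the belief `Bel(x) = p(□x)` is sub-additive: for disjoint
`x, y`, `p(□x) + p(□y) ≤ p(□(x ⊔ y))`. -/
theorem belief_subadditive {B : Type*} [BooleanAlgebra B] (box : B → B)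
    (mi : box ⊤ = ⊤)
    (mii : ∀ x y : B, box (xᶜ ⊔ y) ≤ (box x)ᶜ ⊔ box y)
    (coherent : box ⊥ = ⊥)
    (p : B → ℝ)
    (hp0 : ∀ x : B, 0 ≤ p x)
    (hptop : p ⊤ = 1)
    (hpadd : ∀ x y : B, x ⊓ y = ⊥ → p (x ⊔ y) = p x + p y) :
    ∀ x y : B, x ⊓ y = ⊥ → p (box x) + p (box y) ≤ p (box (x ⊔ y)) := by
  -- box is monotone
  have mono : ∀ a b : B, a ≤ b → box a ≤ box b := by
    intro a b hab
    have h1 : aᶜ ⊔ b = ⊤ := by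
      rw [sup_comm, ← himp_eq]; exact himp_eq_top_iff.mpr hab
    have h2 := mii a b
    rw [h1, mi, top_le_iff, sup_comm, ← himp_eq, himp_eq_top_iff] at h2
    exact h2
  -- box yᶜ ≤ (box y)ᶜ
  have hcompl : ∀ y : B, box yᶜ ≤ (box y)ᶜ := by
    intro y
    have h := mii y ⊥
    rwa [sup_bot_eq, coherent, sup_bot_eq] at h
  -- p monotone
  have pmono : ∀ a b : B, a ≤ b → p a ≤ p b := by
    intro a b hab
    have hdisj : a ⊓ (b \ a) = ⊥ := disjoint_sdiff_self_right.eq_bot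
    have : p (a ⊔ b \ a) = p a + p (b \ a) := hpadd _ _ hdisj
    rw [sup_sdiff_cancel_right hab] at this
    linarith [hp0 (b \ a)]
  intro x y hxy
  have hx : box x ≤ box (x ⊔ y) := mono _ _ le_sup_left
  have hy : box y ≤ box (x ⊔ y) := mono _ _ le_sup_right
  have hd : box x ⊓ box y = ⊥ := by
    have h1 : x ≤ yᶜ := le_compl_iff_disjoint_right.mpr (disjoint_iff.mpr hxy)
    have h2 : box x ≤ (box y)ᶜ := le_trans (mono _ _ h1) (hcompl y)
    exact disjoint_iff.mp (le_compl_iff_disjoint_right.mp h2)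
  calc p (box x) + p (box y) = p (box x ⊔ box y) := (hpadd _ _ hd).symm
    _ ≤ p (box (x ⊔ y)) := pmono _ _ (sup_le hx hy)
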